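/- Let λ ∈ ℂⁿ and 1 ≤ i < j ≤ n, and for i ≤ l < j set ψ_{lj} := f_l f_{l+1} ⋯ f_{j−1} ∈ U_q(gl_n) (the rightmost factor acting first). Then: (a) for every i ≤ l < j, w_l ⊗ ψ_{lj} v_λ ≡ (−1)^{j−l} q^{λ_j − λ_l + l − j + 1} w_j ⊗ v_λ modulo V̂^λ_{j−1}; (b) if ψ is any product of the factors f_i, f_{i+1}, …, f_{j−1}, each occurring exactly once, taken in any order different from f_i f_{i+1} ⋯ f_{j−1}, then w_i ⊗ ψ v_λ ∈ V̂^λ_{j−1}. -/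

import Mathlib

noncomputable section

namespace QGL

/-! ### q-numbers.  Throughout, `q = exp ħ` and `q^z = exp (ħ z)` for `z : ℂ`. -/

/-- `q = exp ħ`. -/
def qh (h : ℂ) : ℂ := Complex.exp h

/-- `q^z = exp (ħ z)` for a complex exponent `z`. -/
def qz (h z : ℂ) : ℂ := Complex.exp (h * z)

/-- the symmetric q-number `[z]_q = (q^z - q^{-z})/(q - q⁻¹)`. -/
def bq (h z : ℂ) : ℂ := (qz h z - qz h (-z)) / (qh h - (qh h)⁻¹)

/-- `q` is not a root of unity. -/
def NotRootOfUnity (q : ℂ) : Prop := ∀ m : ℕ, 0 < m → q ^ m ≠ 1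

/-! ### The quantum nilpotent algebra `U_q(n₋)` (≅ `U_q(n₊)`), by generators and relations. -/

/-- Generators `f_1, …, f_{n-1}` (0-based: `f_0, …, f_{n-2}`). -/
inductive NGen (n : ℕ) : Type
  | f : Fin (n-1) → NGen n

/-- The q-Serre relations of `U_q(n₋)`. -/
inductive NRel (n : ℕ) (q : ℂ) :
    FreeAlgebra ℂ (NGen n) → FreeAlgebra ℂ (NGen n) → Prop
  | serre (i j : Fin (n-1)) (h : (i:ℕ)+1 = j ∨ (j:ℕ)+1 = i) :
      NRel n q
        (FreeAlgebra.ι ℂ (NGen.f i) * FreeAlgebra.ι ℂ (NGen.f i) * FreeAlgebra.ι ℂ (NGen.f j)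
          + FreeAlgebra.ι ℂ (NGen.f j) * FreeAlgebra.ι ℂ (NGen.f i) * FreeAlgebra.ι ℂ (NGen.f i))
        ((q + q⁻¹) •
          (FreeAlgebra.ι ℂ (NGen.f i) * FreeAlgebra.ι ℂ (NGen.f j) * FreeAlgebra.ι ℂ (NGen.f i)))
  | comm (i j : Fin (n-1)) (h : (i:ℕ)+2 ≤ j ∨ (j:ℕ)+2 ≤ i) :
      NRel n q (FreeAlgebra.ι ℂ (NGen.f i) * FreeAlgebra.ι ℂ (NGen.f j))
        (FreeAlgebra.ι ℂ (NGen.f j) * FreeAlgebra.ι ℂ (NGen.f i))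

/-- `U_q(n₋)` (equally `U_q(n₊)`). -/
abbrev Un (n : ℕ) (q : ℂ) := RingQuot (NRel n q)

/-- The generator `f_i` (0-based) of `U_q(n₋)`. -/
def uf (n : ℕ) (q : ℂ) (i : Fin (n-1)) : Un n q :=
  RingQuot.mkAlgHom ℂ (NRel n q) (FreeAlgebra.ι ℂ (NGen.f i))

/-- `f_a` for a natural-number index (junk value `0` out of range). -/
def ufn (n : ℕ) (q : ℂ) (a : ℕ) : Un n q :=
  if h : a < n - 1 then uf n q ⟨a, h⟩ else 0

/-- The monomial `f_{a-1} ⋯ f_1 f_0` (`= 1` for `a = 0`). -/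
def mon (n : ℕ) (q : ℂ) : ℕ → Un n q
  | 0 => 1
  | a+1 => ufn n q a * mon n q a

/-- The left ideal of `U_q(n₋)` generated by `f_0 ^ 2` and the `f_i`, `i ≥ 1` (0-based). -/
def Jideal (n : ℕ) (q : ℂ) : Submodule (Un n q) (Un n q) :=
  Submodule.span (Un n q)
    ({ufn n q 0 * ufn n q 0} ∪ {x | ∃ i : Fin (n-1), 1 ≤ (i:ℕ) ∧ x = uf n q i})

/-- Inclusion `Fin (n-1) → Fin n`, `j ↦ j`. -/
def clo (n : ℕ) (j : Fin (n-1)) : Fin n := ⟨j, by have := j.isLt; omega⟩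

/-- Inclusion `Fin (n-1) → Fin n`, `j ↦ j+1`. -/
def chi (n : ℕ) (j : Fin (n-1)) : Fin n := ⟨(j:ℕ)+1, by have := j.isLt; omega⟩

/-- The natural action of the generator `f_i` on `ℂⁿ`:  `w_j ↦ δ_{ij} w_{j+1}` (0-based). -/
def natF (n : ℕ) (i : Fin (n-1)) : (Fin n → ℂ) →ₗ[ℂ] (Fin n → ℂ) :=
  (LinearMap.single ℂ (fun _ : Fin n => ℂ) (chi n i)).comp (LinearMap.proj (clo n i))

/-! ### The quantum group `U_q(gl_n)` by generators and relations. -/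

/-- Generators `K_i, K_i⁻¹` (`i : Fin n`) and `e_j, f_j` (`j : Fin (n-1)`), 0-based. -/
inductive Gen (n : ℕ) : Type
  | K : Fin n → Gen n
  | Kinv : Fin n → Gen n
  | E : Fin (n-1) → Gen n
  | F : Fin (n-1) → Gen n

/-- Kronecker delta with values in `ℤ`. -/
def dlt {n : ℕ} (i j : Fin n) : ℤ := if i = j then 1 else 0

open FreeAlgebra in
/-- The defining relations of `U_q(gl_n)`. -/
inductive GLRel (n : ℕ) (q : ℂ) :
    FreeAlgebra ℂ (Gen n) → FreeAlgebra ℂ (Gen n) → Prop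
  | KKinv (i : Fin n) : GLRel n q (ι ℂ (Gen.K i) * ι ℂ (Gen.Kinv i)) 1
  | KinvK (i : Fin n) : GLRel n q (ι ℂ (Gen.Kinv i) * ι ℂ (Gen.K i)) 1
  | KK (i j : Fin n) : GLRel n q (ι ℂ (Gen.K i) * ι ℂ (Gen.K j)) (ι ℂ (Gen.K j) * ι ℂ (Gen.K i))
  | KE (i : Fin n) (j : Fin (n-1)) :
      GLRel n q (ι ℂ (Gen.K i) * ι ℂ (Gen.E j))
        ((q ^ (dlt i (clo n j) - dlt i (chi n j))) • (ι ℂ (Gen.E j) * ι ℂ (Gen.K i)))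
  | KF (i : Fin n) (j : Fin (n-1)) :
      GLRel n q (ι ℂ (Gen.K i) * ι ℂ (Gen.F j))
        ((q ^ (dlt i (chi n j) - dlt i (clo n j))) • (ι ℂ (Gen.F j) * ι ℂ (Gen.K i)))
  | EF (i j : Fin (n-1)) :
      GLRel n q (ι ℂ (Gen.E i) * ι ℂ (Gen.F j) - ι ℂ (Gen.F j) * ι ℂ (Gen.E i))
        (if i = j then
          ((q - q⁻¹)⁻¹) •
            (ι ℂ (Gen.K (clo n i)) * ι ℂ (Gen.Kinv (chi n i))
              - ι ℂ (Gen.Kinv (clo n i)) * ι ℂ (Gen.K (chi n i)))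
         else 0)
  | serreE (i j : Fin (n-1)) (h : (i:ℕ)+1 = j ∨ (j:ℕ)+1 = i) :
      GLRel n q
        (ι ℂ (Gen.E i) * ι ℂ (Gen.E i) * ι ℂ (Gen.E j)
          + ι ℂ (Gen.E j) * ι ℂ (Gen.E i) * ι ℂ (Gen.E i))
        ((q + q⁻¹) • (ι ℂ (Gen.E i) * ι ℂ (Gen.E j) * ι ℂ (Gen.E i)))
  | serreF (i j : Fin (n-1)) (h : (i:ℕ)+1 = j ∨ (j:ℕ)+1 = i) :
      GLRel n q
        (ι ℂ (Gen.F i) * ι ℂ (Gen.F i) * ι ℂ (Gen.F j)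
          + ι ℂ (Gen.F j) * ι ℂ (Gen.F i) * ι ℂ (Gen.F i))
        ((q + q⁻¹) • (ι ℂ (Gen.F i) * ι ℂ (Gen.F j) * ι ℂ (Gen.F i)))
  | commE (i j : Fin (n-1)) (h : (i:ℕ)+2 ≤ j ∨ (j:ℕ)+2 ≤ i) :
      GLRel n q (ι ℂ (Gen.E i) * ι ℂ (Gen.E j)) (ι ℂ (Gen.E j) * ι ℂ (Gen.E i))
  | commF (i j : Fin (n-1)) (h : (i:ℕ)+2 ≤ j ∨ (j:ℕ)+2 ≤ i) :
      GLRel n q (ι ℂ (Gen.F i) * ι ℂ (Gen.F j)) (ι ℂ (Gen.F j) * ι ℂ (Gen.F i))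

/-- The quantum group `U_q(gl_n)`. -/
abbrev Uq (n : ℕ) (q : ℂ) := RingQuot (GLRel n q)

def uK (n : ℕ) (q : ℂ) (i : Fin n) : Uq n q :=
  RingQuot.mkAlgHom ℂ (GLRel n q) (FreeAlgebra.ι ℂ (Gen.K i))

def uKinv (n : ℕ) (q : ℂ) (i : Fin n) : Uq n q :=
  RingQuot.mkAlgHom ℂ (GLRel n q) (FreeAlgebra.ι ℂ (Gen.Kinv i))

def uE (n : ℕ) (q : ℂ) (j : Fin (n-1)) : Uq n q :=
  RingQuot.mkAlgHom ℂ (GLRel n q) (FreeAlgebra.ι ℂ (Gen.E j))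

def uF (n : ℕ) (q : ℂ) (j : Fin (n-1)) : Uq n q :=
  RingQuot.mkAlgHom ℂ (GLRel n q) (FreeAlgebra.ι ℂ (Gen.F j))

/-- `U_q(gl_n)` with `q = exp ħ`. -/
abbrev UQ (n : ℕ) (h : ℂ) := Uq n (qh h)

/-- `K_a` for a natural-number index (junk value `1` out of range). -/
def uKn (n : ℕ) (h : ℂ) (a : ℕ) : UQ n h := if ha : a < n then uK n (qh h) ⟨a, ha⟩ else 1

/-- `K_a⁻¹` for a natural-number index (junk value `1` out of range). -/
def uKinvn (n : ℕ) (h : ℂ) (a : ℕ) : UQ n h := if ha : a < n then uKinv n (qh h) ⟨a, ha⟩ else 1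

/-- `e_a` for a natural-number index (junk value `0` out of range). -/
def uEn (n : ℕ) (h : ℂ) (a : ℕ) : UQ n h := if ha : a < n - 1 then uE n (qh h) ⟨a, ha⟩ else 0

/-- `f_a` for a natural-number index (junk value `0` out of range). -/
def uFn (n : ℕ) (h : ℂ) (a : ℕ) : UQ n h := if ha : a < n - 1 then uF n (qh h) ⟨a, ha⟩ else 0

/-! ### Verma modules. -/

/-- The left ideal generated by the `e_j` and the `K_i - q^{λ_i}`. -/
def VermaIdeal (n : ℕ) (h : ℂ) (lam : Fin n → ℂ) : Submodule (UQ n h) (UQ n h) :=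
  Submodule.span (UQ n h)
    ({x | ∃ j : Fin (n-1), x = uE n (qh h) j} ∪
     {x | ∃ i : Fin n, x = uK n (qh h) i - algebraMap ℂ (UQ n h) (qz h (lam i))})

/-- The Verma module `M̂_λ`. -/
abbrev Verma (n : ℕ) (h : ℂ) (lam : Fin n → ℂ) := UQ n h ⧸ VermaIdeal n h lam

/-- The highest-weight generator `v_λ` of `M̂_λ`. -/
def vv (n : ℕ) (h : ℂ) (lam : Fin n → ℂ) : Verma n h lam := Submodule.Quotient.mk 1

/-! ### Dynamical root vectors. -/

/-- The Cartan coefficient `C(c) = (q^c K_{a+1} K_b⁻¹ - q^{-c} K_{a+1}⁻¹ K_b)/(q - q⁻¹)`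
(0-based indices). -/
def Cc (n : ℕ) (h : ℂ) (a b c : ℕ) : UQ n h :=
  ((qh h - (qh h)⁻¹)⁻¹) •
    ((qh h ^ c) • (uKn n h (a+1) * uKinvn n h b)
      - ((qh h)⁻¹ ^ c) • (uKinvn n h (a+1) * uKn n h b))

/-- The dynamical root vector `f̌_{ε_a - ε_b}` (0-based indices `a < b < n`). -/
def fcheck (n : ℕ) (h : ℂ) (a b : ℕ) : UQ n h :=
  if hb : b ≤ a + 1 then uFn n h a
  else uFn n h a * fcheck n h (a+1) b * Cc n h a b (b-a-1)
    - fcheck n h (a+1) b * uFn n h a * Cc n h a b (b-a-2)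
termination_by b - a
decreasing_by all_goals omega

/-- `f̌_{ε_a - ε_b}` extended by the convention `f̌_0 = 1`. -/
def fcheckE (n : ℕ) (h : ℂ) (a b : ℕ) : UQ n h := if a = b then 1 else fcheck n h a b

/-- `λ_a` for a natural-number index (junk value `0` out of range). -/
def lamn (n : ℕ) (lam : Fin n → ℂ) (a : ℕ) : ℂ := if ha : a < n then lam ⟨a, ha⟩ else 0

/-! ### The module `ℂⁿ ⊗ Y`, realized on `Fin n → Y` via `Σ_i w_i ⊗ y_i ↔ (y_i)_i`. -/

section Tensor

variable (n : ℕ) (h : ℂ) {Y : Type*} [AddCommGroup Y] [Module ℂ Y] [Module (UQ n h) Y]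

/-- The action of `e_k` on `ℂⁿ ⊗ Y`:  `e_k(w ⊗ y) = e_k w ⊗ y + K_k K_{k+1}⁻¹ w ⊗ e_k y`. -/
def Etens (k : Fin (n-1)) (u : Fin n → Y) : Fin n → Y := fun j =>
  (if j = clo n k then u (chi n k) else 0)
    + (qh h ^ (dlt (clo n k) j - dlt (chi n k) j)) • (uE n (qh h) k • u j)

/-- The action of `f_k` on `ℂⁿ ⊗ Y`:  `f_k(w ⊗ y) = w ⊗ f_k y + f_k w ⊗ K_k⁻¹ K_{k+1} y`. -/
def Ftens (k : Fin (n-1)) (u : Fin n → Y) : Fin n → Y := fun j =>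
  (uF n (qh h) k • u j)
    + (if j = chi n k then (uKinv n (qh h) (clo n k) * uK n (qh h) (chi n k)) • u (clo n k) else 0)

/-- The action of `K_i` on `ℂⁿ ⊗ Y`:  `K_i(w ⊗ y) = K_i w ⊗ K_i y`. -/
def Ktens (i : Fin n) (u : Fin n → Y) : Fin n → Y := fun j =>
  (if i = j then qh h else 1) • (uK n (qh h) i • u j)

/-- The action of `K_i⁻¹` on `ℂⁿ ⊗ Y`:  `K_i⁻¹(w ⊗ y) = K_i⁻¹ w ⊗ K_i⁻¹ y`. -/
def Kinvtens (i : Fin n) (u : Fin n → Y) : Fin n → Y := fun j =>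
  (if i = j then (qh h)⁻¹ else 1) • (uKinv n (qh h) i • u j)

end Tensor

/-- `V̂^λ_c`: the smallest subspace of `ℂⁿ ⊗ M̂_λ` containing `w_p ⊗ v_λ` for `p < c`
(0-based) and stable under all `f_k`. -/
def Vhat (n : ℕ) (h : ℂ) (lam : Fin n → ℂ) (c : ℕ) : Submodule ℂ (Fin n → Verma n h lam) :=
  sInf {W | (∀ p : Fin n, (p:ℕ) < c → Pi.single p (vv n h lam) ∈ W) ∧
            ∀ (k : Fin (n-1)) x, x ∈ W → Ftens n h k x ∈ W}

/-- The coefficient `(-q)^a ∏_{j<a} [λ_j - λ_l + l - j - 1]_q` of `û_l` (0-based). -/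
def coefu (n : ℕ) (h : ℂ) (lam : Fin n → ℂ) (l a : ℕ) : ℂ :=
  (-(qh h))^a * ∏ j ∈ Finset.range a, bq h (lamn n lam j - lamn n lam l + (l:ℂ) - (j:ℂ) - 1)

/-- The vector `û_l = Σ_{a ≤ l} (-q)^a (∏_{j<a} [λ_j-λ_l+l-j-1]_q) · w_a ⊗ f̌_{ε_a-ε_l} v_λ`
(0-based `l`). -/
def uhat (n : ℕ) (h : ℂ) (lam : Fin n → ℂ) (l : ℕ) : Fin n → Verma n h lam := fun a =>
  if (a:ℕ) ≤ l then coefu n h lam l a • (fcheckE n h a l • vv n h lam) else 0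

/-- `M̂^λ_l`: the `U_q(gl_n)`-submodule of `ℂⁿ ⊗ M̂_λ` generated by `û_l` (0-based `l`). -/
def Mhat (n : ℕ) (h : ℂ) (lam : Fin n → ℂ) (l : ℕ) : Submodule ℂ (Fin n → Verma n h lam) :=
  sInf {W | uhat n h lam l ∈ W ∧
            (∀ (k : Fin (n-1)) x, x ∈ W → Etens n h k x ∈ W) ∧
            (∀ (k : Fin (n-1)) x, x ∈ W → Ftens n h k x ∈ W) ∧
            (∀ (i : Fin n) x, x ∈ W → Ktens n h i x ∈ W) ∧
            (∀ (i : Fin n) x, x ∈ W → Kinvtens n h i x ∈ W)}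

/-- The principal monomial `ψ_{ab} = f_a f_{a+1} ⋯ f_{b-1}` (0-based). -/
def psi (n : ℕ) (h : ℂ) (a b : ℕ) : UQ n h :=
  ((List.range (b - a)).map (fun t => uFn n h (a + t))).prod

/-! ### Blocks, admissible permutations, the shifted Weyl action. -/

/-- The 0-based starting position `o_i = n_1 + ⋯ + n_{i-1}` of the `i`-th block. -/
def ost (k : ℕ) (nn : Fin k → ℕ) (i : Fin k) : ℕ := ∑ j ∈ Finset.Iio i, nn j

/-- `a` and `b` lie in the same block. -/
def sameBlock (n k : ℕ) (nn : Fin k → ℕ) (a b : Fin n) : Prop :=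
  ∃ i : Fin k, ost k nn i ≤ (a:ℕ) ∧ (a:ℕ) < ost k nn i + nn i ∧
    ost k nn i ≤ (b:ℕ) ∧ (b:ℕ) < ost k nn i + nn i

/-- A permutation is admissible if it is increasing on each block. -/
def Admissible (n k : ℕ) (nn : Fin k → ℕ) (σ : Equiv.Perm (Fin n)) : Prop :=
  ∀ a b : Fin n, a < b → sameBlock n k nn a b → σ a < σ b

/-- The shifted action `σ·λ = σ(λ+ρ) - ρ`, with `ρ = (n-1, n-2, …, 0)`. -/
def sdot (n : ℕ) (σ : Equiv.Perm (Fin n)) (lam : Fin n → ℂ) : Fin n → ℂ := fun a =>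
  (lam (σ⁻¹ a) + ((n:ℂ) - 1 - (((σ⁻¹ a : Fin n) : ℕ) : ℂ))) - ((n:ℂ) - 1 - ((a:ℕ) : ℂ))

/-- The submodule of `M̂_{σ·λ}` generated by the singular vectors
`f̌_{ε_{σ(i)} - ε_{σ(i+1)}} v_{σ·λ}`, over all `i` with `i, i+1` in the same block. -/
def NSub (n : ℕ) (h : ℂ) (k : ℕ) (nn : Fin k → ℕ) (σ : Equiv.Perm (Fin n))
    (lam : Fin n → ℂ) : Submodule (UQ n h) (Verma n h (sdot n σ lam)) :=
  Submodule.span (UQ n h)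
    {x | ∃ (i : Fin n) (hi : (i:ℕ)+1 < n), sameBlock n k nn i ⟨(i:ℕ)+1, hi⟩ ∧
      x = fcheck n h ((σ i : Fin n) : ℕ) ((σ ⟨(i:ℕ)+1, hi⟩ : Fin n) : ℕ) • vv n h (sdot n σ lam)}

section Projection

variable (n : ℕ) (h : ℂ) {W : Type*} [AddCommGroup W] [Module ℂ W] [Module (UQ n h) W]
  [IsScalarTower ℂ (UQ n h) W] (N : Submodule (UQ n h) W)

/-- The map `id ⊗ ϖ : ℂⁿ ⊗ W → ℂⁿ ⊗ (W/N)` in the realization on `n`-tuples. -/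
def piMkQ : (Fin n → W) →ₗ[ℂ] (Fin n → W ⧸ N) where
  toFun u := fun j => Submodule.Quotient.mk (u j)
  map_add' u v := by funext j; simp
  map_smul' c u := by funext j; simp [← Submodule.Quotient.mk_smul]

end Projection

namespace Aux
variable (n : ℕ) (h : ℂ) (lam : Fin n → ℂ)

lemma qh_ne : qh h ≠ 0 := Complex.exp_ne_zero h
lemma qz_ne (z : ℂ) : qz h z ≠ 0 := Complex.exp_ne_zero _
lemma qz_add (a b : ℂ) : qz h (a + b) = qz h a * qz h b := by
  simp [qz, mul_add, Complex.exp_add]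
lemma qz_neg (a : ℂ) : qz h (-a) = (qz h a)⁻¹ := by
  rw [qz, qz, ← Complex.exp_neg, mul_neg]
lemma qz_int (m : ℤ) : qz h (m : ℂ) = qh h ^ m := by
  rw [qz, qh, mul_comm, Complex.exp_int_mul]

lemma qh_inv_eq : (qh h)⁻¹ = qz h (-1) := by
  rw [qz, mul_neg_one, Complex.exp_neg, qh]

lemma rel_KF (a : Fin n) (k : Fin (n-1)) :
    uK n (qh h) a * uF n (qh h) k
      = (qh h ^ (dlt a (chi n k) - dlt a (clo n k))) • (uF n (qh h) k * uK n (qh h) a) := by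
  have := RingQuot.mkAlgHom_rel ℂ (GLRel.KF (q := qh h) a k)
  simpa [uK, uF, map_mul, map_smul] using this

lemma rel_KKinv (a : Fin n) : uK n (qh h) a * uKinv n (qh h) a = 1 := by
  have := RingQuot.mkAlgHom_rel ℂ (GLRel.KKinv (q := qh h) a)
  simpa [uK, uKinv, map_mul] using this

lemma rel_KinvK (a : Fin n) : uKinv n (qh h) a * uK n (qh h) a = 1 := by
  have := RingQuot.mkAlgHom_rel ℂ (GLRel.KinvK (q := qh h) a)
  simpa [uK, uKinv, map_mul] using this

lemma rel_KinvF (a : Fin n) (k : Fin (n-1)) :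
    uKinv n (qh h) a * uF n (qh h) k
      = (qh h ^ (dlt a (clo n k) - dlt a (chi n k))) • (uF n (qh h) k * uKinv n (qh h) a) := by
  set d : ℤ := dlt a (chi n k) - dlt a (clo n k) with hd
  have h1 := rel_KF n h a k
  have hFK : uF n (qh h) k * uK n (qh h) a
      = (qh h ^ (-d)) • (uK n (qh h) a * uF n (qh h) k) := by
    rw [h1, smul_smul, ← zpow_add₀ (qh_ne h), neg_add_cancel, zpow_zero, one_smul]
  have key : uKinv n (qh h) a * uF n (qh h) k
      = uKinv n (qh h) a * ((uF n (qh h) k * uK n (qh h) a) * uKinv n (qh h) a) := by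
    rw [mul_assoc (uF n (qh h) k), rel_KKinv, mul_one]
  rw [key, hFK, smul_mul_assoc, mul_smul_comm, ← mul_assoc, ← mul_assoc, rel_KinvK, one_mul]
  have : -d = dlt a (clo n k) - dlt a (chi n k) := by rw [hd]; ring
  rw [← this]

end Aux
variable (n : ℕ) (h : ℂ) (lam : Fin n → ℂ)

lemma smul_vv (u : UQ n h) : u • vv n h lam = Submodule.Quotient.mk u := by
  rw [vv, ← Submodule.Quotient.mk_smul]
  simp [smul_eq_mul]

lemma csmul_vv (c : ℂ) : c • vv n h lam =
    Submodule.Quotient.mk (algebraMap ℂ (UQ n h) c) := by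
  rw [vv, ← Submodule.Quotient.mk_smul]
  congr 1
  exact Algebra.algebraMap_eq_smul_one c |>.symm

lemma uE_vv (k : Fin (n-1)) : uE n (qh h) k • vv n h lam = 0 := by
  rw [smul_vv, Submodule.Quotient.mk_eq_zero]
  exact Submodule.subset_span (Or.inl ⟨k, rfl⟩)

lemma uK_vv (a : Fin n) : uK n (qh h) a • vv n h lam = qz h (lam a) • vv n h lam := by
  rw [smul_vv, csmul_vv, ← sub_eq_zero, ← Submodule.Quotient.mk_sub,
    Submodule.Quotient.mk_eq_zero]
  exact Submodule.subset_span (Or.inr ⟨a, rfl⟩)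

lemma uKinv_vv (a : Fin n) :
    uKinv n (qh h) a • vv n h lam = qz h (-lam a) • vv n h lam := by
  have h1 : (uKinv n (qh h) a * uK n (qh h) a) • vv n h lam = vv n h lam := by
    rw [Aux.rel_KinvK, one_smul]
  rw [mul_smul, uK_vv, smul_comm] at h1
  have h3 : uKinv n (qh h) a • vv n h lam
      = (qz h (lam a))⁻¹ • (qz h (lam a) • (uKinv n (qh h) a • vv n h lam)) :=
    (inv_smul_smul₀ (Aux.qz_ne h (lam a)) (uKinv n (qh h) a • vv n h lam)).symm
  rw [h1, ← Aux.qz_neg] at h3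
  exact h3
set_option synthInstance.maxHeartbeats 1000000
set_option maxHeartbeats 1000000

variable (n : ℕ) (h : ℂ)

def prodF (L : List ℕ) : UQ n h := (L.map (uFn n h)).prod

def wtc (a : ℕ) (L : List ℕ) : ℤ := (L.countP (fun t => t + 1 = a) : ℤ) - (L.count a : ℤ)

lemma prodF_nil : prodF n h [] = 1 := rfl
lemma prodF_cons (k : ℕ) (L : List ℕ) :
    prodF n h (k :: L) = uFn n h k * prodF n h L := by
  simp [prodF]

lemma wtc_cons (a k : ℕ) (hk : k < n - 1) (ha : a < n) (L : List ℕ) :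
    wtc a (k :: L) = wtc a L +
      (dlt (⟨a, ha⟩ : Fin n) (chi n ⟨k, hk⟩) - dlt (⟨a, ha⟩ : Fin n) (clo n ⟨k, hk⟩)) := by
  simp only [wtc, dlt, chi, clo, List.countP_cons, List.count_cons, Fin.mk.injEq, beq_iff_eq, decide_eq_true_eq]
  push_cast
  split_ifs <;> omega

variable (lam : Fin n → ℂ)

lemma uK_prodF (a : Fin n) :
    ∀ L : List ℕ, (∀ x ∈ L, x < n - 1) →
    uK n (qh h) a • (prodF n h L • vv n h lam)
      = (qz h (lam a) * qh h ^ wtc (a : ℕ) L) • (prodF n h L • vv n h lam)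
  | [], _ => by
    simp [prodF_nil, wtc, uK_vv]
  | k :: L, hL => by
    have hk : k < n - 1 := hL k (by simp)
    have IH := uK_prodF a L (fun x hx => hL x (by simp [hx]))
    have hFk : uFn n h k = uF n (qh h) ⟨k, hk⟩ := by simp [uFn, hk]
    set F := uF n (qh h) ⟨k, hk⟩ with hF
    set z := prodF n h L • vv n h lam with hz
    set c := qz h (lam a) * qh h ^ wtc (a : ℕ) L with hc
    set d : ℤ := dlt a (chi n ⟨k, hk⟩) - dlt a (clo n ⟨k, hk⟩) with hd
    have key : uK n (qh h) a • (F • z) = (qh h ^ d * c) • (F • z) := by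
      calc uK n (qh h) a • (F • z) = (uK n (qh h) a * F) • z := (mul_smul _ _ _).symm
        _ = (qh h ^ d • (F * uK n (qh h) a)) • z := by rw [Aux.rel_KF]
        _ = qh h ^ d • ((F * uK n (qh h) a) • z) := by rw [smul_assoc]
        _ = qh h ^ d • (F • (uK n (qh h) a • z)) := by rw [mul_smul]
        _ = qh h ^ d • (F • (c • z)) := by rw [IH]
        _ = qh h ^ d • (c • (F • z)) := by
              have hcomm : F • (c • z) = c • (F • z) := (smul_comm c F z).symm
              rw [hcomm]
        _ = (qh h ^ d * c) • (F • z) := by exact smul_smul (qh h ^ d) c (F • z)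
    rw [prodF_cons, hFk, mul_smul, key, wtc_cons n a k hk a.isLt]
    congr 1
    rw [hc]
    have hfa : (⟨(a : ℕ), a.isLt⟩ : Fin n) = a := rfl
    rw [hfa, zpow_add₀ (Aux.qh_ne h)]
    ring

lemma uKinv_prodF (a : Fin n) :
    ∀ L : List ℕ, (∀ x ∈ L, x < n - 1) →
    uKinv n (qh h) a • (prodF n h L • vv n h lam)
      = (qz h (-lam a) * qh h ^ (-wtc (a : ℕ) L)) • (prodF n h L • vv n h lam)
  | [], _ => by
    simp [prodF_nil, wtc, uKinv_vv]
  | k :: L, hL => by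
    have hk : k < n - 1 := hL k (by simp)
    have IH := uKinv_prodF a L (fun x hx => hL x (by simp [hx]))
    have hFk : uFn n h k = uF n (qh h) ⟨k, hk⟩ := by simp [uFn, hk]
    set F := uF n (qh h) ⟨k, hk⟩ with hF
    set z := prodF n h L • vv n h lam with hz
    set c := qz h (-lam a) * qh h ^ (-wtc (a : ℕ) L) with hc
    set d : ℤ := dlt a (clo n ⟨k, hk⟩) - dlt a (chi n ⟨k, hk⟩) with hd
    have key : uKinv n (qh h) a • (F • z) = (qh h ^ d * c) • (F • z) := by
      calc uKinv n (qh h) a • (F • z) = (uKinv n (qh h) a * F) • z := (mul_smul _ _ _).symm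
        _ = (qh h ^ d • (F * uKinv n (qh h) a)) • z := by rw [Aux.rel_KinvF]
        _ = qh h ^ d • ((F * uKinv n (qh h) a) • z) := by rw [smul_assoc]
        _ = qh h ^ d • (F • (uKinv n (qh h) a • z)) := by rw [mul_smul]
        _ = qh h ^ d • (F • (c • z)) := by rw [IH]
        _ = qh h ^ d • (c • (F • z)) := by
              have hcomm : F • (c • z) = c • (F • z) := (smul_comm c F z).symm
              rw [hcomm]
        _ = (qh h ^ d * c) • (F • z) := by exact smul_smul (qh h ^ d) c (F • z)
    rw [prodF_cons, hFk, mul_smul, key, wtc_cons n a k hk a.isLt]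
    congr 1
    rw [hc]
    have h1 : (⟨(a : ℕ), a.isLt⟩ : Fin n) = a := rfl
    rw [h1, neg_add, zpow_add₀ (Aux.qh_ne h), hd]
    rw [show -(dlt a (chi n ⟨k, hk⟩) - dlt a (clo n ⟨k, hk⟩))
        = dlt a (clo n ⟨k, hk⟩) - dlt a (chi n ⟨k, hk⟩) by ring]
    ring

lemma Ftens_single_ne (k : Fin (n-1)) (p : Fin n) (hp : p ≠ clo n k) (x : Verma n h lam) :
    Ftens n h k (Pi.single p x) = Pi.single p (uF n (qh h) k • x) := by
  funext j
  simp only [Ftens, Pi.single_apply, Ne.symm hp, if_false]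
  split_ifs <;> simp

lemma Ftens_single_eq (k : Fin (n-1)) (x : Verma n h lam) :
    Ftens n h k (Pi.single (clo n k) x) = Pi.single (clo n k) (uF n (qh h) k • x)
      + Pi.single (chi n k) ((uKinv n (qh h) (clo n k) * uK n (qh h) (chi n k)) • x) := by
  funext j
  simp only [Ftens, Pi.single_apply, Pi.add_apply]
  split_ifs <;> simp

lemma Vhat_single (j : ℕ) (p : Fin n) (hp : (p : ℕ) < j) :
    Pi.single p (vv n h lam) ∈ Vhat n h lam j := by
  rw [Vhat, Submodule.mem_sInf]
  intro W hW
  exact hW.1 p hp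

lemma Vhat_Ftens (j : ℕ) (k : Fin (n-1)) {u : Fin n → Verma n h lam}
    (hu : u ∈ Vhat n h lam j) : Ftens n h k u ∈ Vhat n h lam j := by
  rw [Vhat, Submodule.mem_sInf] at hu ⊢
  intro W hW
  exact hW.2 k u (hu W hW)

lemma KK_prodF (k : Fin (n-1)) (L : List ℕ) (hL : ∀ x ∈ L, x < n - 1) :
    (uKinv n (qh h) (clo n k) * uK n (qh h) (chi n k)) • (prodF n h L • vv n h lam)
      = (qz h (lam (chi n k) - lam (clo n k))
          * qh h ^ (wtc ((chi n k : Fin n) : ℕ) L - wtc ((clo n k : Fin n) : ℕ) L))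
            • (prodF n h L • vv n h lam) := by
  set z := prodF n h L • vv n h lam with hz
  set c1 := qz h (lam (chi n k)) * qh h ^ wtc ((chi n k : Fin n) : ℕ) L with hc1
  set c2 := qz h (-lam (clo n k)) * qh h ^ (-wtc ((clo n k : Fin n) : ℕ) L) with hc2
  have s1 : uK n (qh h) (chi n k) • z = c1 • z := uK_prodF n h lam _ L hL
  have s2 : uKinv n (qh h) (clo n k) • z = c2 • z := uKinv_prodF n h lam _ L hL
  calc (uKinv n (qh h) (clo n k) * uK n (qh h) (chi n k)) • z
      = uKinv n (qh h) (clo n k) • (uK n (qh h) (chi n k) • z) := mul_smul _ _ _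
    _ = uKinv n (qh h) (clo n k) • (c1 • z) := by rw [s1]
    _ = c1 • (uKinv n (qh h) (clo n k) • z) :=
        (smul_comm c1 (uKinv n (qh h) (clo n k)) z).symm
    _ = c1 • (c2 • z) := by rw [s2]
    _ = (c1 * c2) • z := by exact smul_smul c1 c2 z
    _ = _ := by
        congr 1
        rw [hc1, hc2, sub_eq_add_neg (lam (chi n k)), Aux.qz_add,
          sub_eq_add_neg (wtc ((chi n k : Fin n) : ℕ) L), zpow_add₀ (Aux.qh_ne h)]
        ring

def fail (j : ℕ) : ℕ → List ℕ → Prop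
  | p, [] => j ≤ p
  | p, k :: L => fail j p L ∨ (p = k ∧ fail j (p+1) L)

lemma single_csmul (p : Fin n) (c : ℂ) (x : Verma n h lam) :
    (Pi.single p (c • x) : Fin n → Verma n h lam)
      = c • (Pi.single p x : Fin n → Verma n h lam) := by
  funext j'
  rcases eq_or_ne j' p with rfl | hne
  · simp
  · simp only [Pi.smul_apply, Pi.single_eq_of_ne hne]
    exact (smul_zero (A := Verma n h lam) c).symm

lemma mem_of_not_fail (j : ℕ) :
    ∀ L : List ℕ, (∀ x ∈ L, x < n - 1) → ∀ (p : ℕ) (hp : p < n), ¬ fail j p L →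
    Pi.single (⟨p, hp⟩ : Fin n) (prodF n h L • vv n h lam) ∈ Vhat n h lam j
  | [], _, p, hp, hf => by
    rw [prodF_nil, one_smul]
    simp only [fail] at hf
    exact Vhat_single n h lam j ⟨p, hp⟩ (show p < j by omega)
  | k :: L, hL, p, hp, hf => by
    have hk : k < n - 1 := hL k (by simp)
    have hL' : ∀ x ∈ L, x < n - 1 := fun x hx => hL x (by simp [hx])
    have hf1 : ¬ fail j p L := fun hh => hf (Or.inl hh)
    have hFk : uFn n h k = uF n (qh h) ⟨k, hk⟩ := by simp [uFn, hk]
    rw [prodF_cons, mul_smul, hFk]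
    set x := prodF n h L • vv n h lam with hx
    by_cases hpk : p = k
    · subst hpk
      have hf2 : ¬ fail j (p+1) L := fun hh => hf (Or.inr ⟨rfl, hh⟩)
      have hclo : (⟨p, hp⟩ : Fin n) = clo n ⟨p, hk⟩ := rfl
      rw [hclo]
      have heq : Pi.single (clo n ⟨p, hk⟩) (uF n (qh h) ⟨p, hk⟩ • x)
          = Ftens n h ⟨p, hk⟩ (Pi.single (clo n ⟨p, hk⟩) x)
            - Pi.single (chi n ⟨p, hk⟩)
                ((uKinv n (qh h) (clo n ⟨p, hk⟩) * uK n (qh h) (chi n ⟨p, hk⟩)) • x) := by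
        rw [Ftens_single_eq]
        abel
      rw [heq, KK_prodF n h lam ⟨p, hk⟩ L hL']
      have m1 : Ftens n h ⟨p, hk⟩ (Pi.single (clo n ⟨p, hk⟩) x) ∈ Vhat n h lam j :=
        Vhat_Ftens n h lam j _ (mem_of_not_fail j L hL' p hp hf1)
      have m2 : Pi.single (chi n ⟨p, hk⟩)
          ((qz h (lam (chi n ⟨p, hk⟩) - lam (clo n ⟨p, hk⟩))
            * qh h ^ (wtc ((chi n ⟨p, hk⟩ : Fin n) : ℕ) L - wtc ((clo n ⟨p, hk⟩ : Fin n) : ℕ) L)) • x)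
          ∈ Vhat n h lam j := by
        rw [single_csmul]
        exact Submodule.smul_mem _ _
          (mem_of_not_fail j L hL' (p+1) (by omega) hf2)
      exact sub_mem m1 m2
    · have hne : (⟨p, hp⟩ : Fin n) ≠ clo n ⟨k, hk⟩ := by
        simp [clo, Fin.ext_iff, hpk]
      rw [← Ftens_single_ne n h lam ⟨k, hk⟩ _ hne]
      exact Vhat_Ftens n h lam j _ (mem_of_not_fail j L hL' p hp hf1)

lemma not_fail_of_not_mem (j : ℕ) :
    ∀ L : List ℕ, ∀ p : ℕ, p < j → p ∉ L → ¬ fail j p L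
  | [], p, hpj, _ => by simp only [fail]; omega
  | k :: L, p, hpj, hpL => by
    have h1 : p ≠ k := by simp at hpL; tauto
    have h2 : p ∉ L := by simp at hpL; tauto
    intro hf
    rcases hf with hf | ⟨he, _⟩
    · exact not_fail_of_not_mem j L p hpj h2 hf
    · exact h1 he

lemma fail_filter (j : ℕ) :
    ∀ L : List ℕ, L.Nodup → (∀ x ∈ L, x < j) → ∀ p : ℕ, fail j p L →
    L.filter (fun x => decide (p ≤ x)) = List.range' p (j - p)
  | [], _, _, p, hf => by
    simp only [fail] at hf
    simp [List.filter_nil, show j - p = 0 by omega]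
  | k :: L, hnd, hlt, p, hf => by
    have hk : k < j := hlt k (by simp)
    have hndL : L.Nodup := (List.nodup_cons.mp hnd).2
    have hkL : k ∉ L := (List.nodup_cons.mp hnd).1
    have hltL : ∀ x ∈ L, x < j := fun x hx => hlt x (by simp [hx])
    rcases hf with hf | ⟨rfl, hf⟩
    · have IH := fail_filter j L hndL hltL p hf
      by_cases hpk : p ≤ k
      · -- k ∈ range' p (j-p) = filter, so k ∈ L, contradiction
        exfalso
        have : k ∈ List.range' p (j - p) := by
          rw [List.mem_range'_1]
          omega
        rw [← IH] at this
        exact hkL (List.mem_of_mem_filter this)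
      · rw [List.filter_cons_of_neg (by simpa using hpk), IH]
    · have IH := fail_filter j L hndL hltL (p+1) hf
      rw [List.filter_cons_of_pos (by simp)]
      have hfe : L.filter (fun x => decide (p ≤ x)) = L.filter (fun x => decide (p+1 ≤ x)) := by
        apply List.filter_congr
        intro x hxL
        have : x ≠ p := fun hh => hkL (hh ▸ hxL)
        simp only [decide_eq_decide]
        omega
      rw [hfe, IH, show j - p = (j - (p+1)) + 1 by omega, List.range'_succ]

lemma psi_cons (a b : ℕ) (hab : a < b) :
    psi n h a b = uFn n h a * psi n h (a+1) b := by
  rw [psi, psi, show b - a = (b - (a+1)) + 1 by omega, List.range_succ_eq_map]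
  rw [List.map_cons, List.prod_cons, List.map_map, add_zero]
  congr 1
  congr 1
  apply List.map_congr_left
  intro t _
  simp only [Function.comp_apply]
  congr 1
  omega

lemma psi_prodF (a b : ℕ) : psi n h a b = prodF n h (List.range' a (b - a)) := by
  rw [psi, prodF, List.range'_eq_map_range]
  simp [List.map_map, Function.comp_def]

lemma psi_self (a : ℕ) : psi n h a a = 1 := by simp [psi]

lemma parta (j : ℕ) (hjn : j < n) :
    ∀ (d l : ℕ) (hln : l < n), l + d + 1 = j →
    Pi.single (⟨l, hln⟩ : Fin n) (psi n h l j • vv n h lam)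
      - ((-1:ℂ)^(j-l) * qz h (lam ⟨j, hjn⟩ - lam ⟨l, hln⟩ + (l:ℂ) - (j:ℂ) + 1)) •
          (Pi.single (⟨j, hjn⟩ : Fin n) (vv n h lam) : Fin n → Verma n h lam)
      ∈ Vhat n h lam j
  | 0, l, hln, hd => by
    have hj1 : l + 1 = j := by omega
    have hk : l < n - 1 := by omega
    have huFn : uFn n h l = uF n (qh h) ⟨l, hk⟩ := by simp [uFn, hk]
    have hx : psi n h l j • vv n h lam = uF n (qh h) ⟨l, hk⟩ • vv n h lam := by
      rw [psi_cons n h l j (by omega), ← hj1, psi_self, mul_one, huFn]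
    have h2 : (uKinv n (qh h) (clo n ⟨l, hk⟩) * uK n (qh h) (chi n ⟨l, hk⟩)) • vv n h lam
        = (qz h (lam (chi n ⟨l, hk⟩) - lam (clo n ⟨l, hk⟩))
            * qh h ^ (wtc ((chi n ⟨l, hk⟩ : Fin n) : ℕ) ([] : List ℕ)
                - wtc ((clo n ⟨l, hk⟩ : Fin n) : ℕ) ([] : List ℕ))) • vv n h lam := by
      have := KK_prodF n h lam ⟨l, hk⟩ [] (by simp)
      rwa [prodF_nil, one_smul] at this
    have hwtc : ∀ a : ℕ, wtc a ([] : List ℕ) = 0 := fun a => by simp [wtc]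
    set s0 := qz h (lam (chi n ⟨l, hk⟩) - lam (clo n ⟨l, hk⟩)) with hs0
    have h2' : (uKinv n (qh h) (clo n ⟨l, hk⟩) * uK n (qh h) (chi n ⟨l, hk⟩)) • vv n h lam
        = s0 • vv n h lam := by
      rw [h2, hwtc, hwtc]
      norm_num
    have hchij : chi n ⟨l, hk⟩ = (⟨j, hjn⟩ : Fin n) := by
      simp [chi, Fin.ext_iff, hj1]
    have hcloj : clo n ⟨l, hk⟩ = (⟨l, hln⟩ : Fin n) := rfl
    have hC : ((-1:ℂ)^(j-l) * qz h (lam ⟨j, hjn⟩ - lam ⟨l, hln⟩ + (l:ℂ) - (j:ℂ) + 1)) = -s0 := by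
      rw [hs0, hchij, hcloj, show j - l = 1 by omega]
      have hcast : ((j:ℕ) : ℂ) = ((l:ℕ) : ℂ) + 1 := by
        rw [← hj1]; push_cast; ring
      rw [hcast]
      ring_nf
    have heq : Pi.single (clo n ⟨l, hk⟩) (uF n (qh h) ⟨l, hk⟩ • vv n h lam)
        = Ftens n h ⟨l, hk⟩ (Pi.single (clo n ⟨l, hk⟩) (vv n h lam))
          - Pi.single (chi n ⟨l, hk⟩)
              ((uKinv n (qh h) (clo n ⟨l, hk⟩) * uK n (qh h) (chi n ⟨l, hk⟩)) • vv n h lam) := by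
      rw [Ftens_single_eq]
      abel
    rw [hx, hC, show (⟨l, hln⟩ : Fin n) = clo n ⟨l, hk⟩ from rfl, heq, h2', single_csmul, hchij]
    have hfin : Ftens n h ⟨l, hk⟩ (Pi.single (clo n ⟨l, hk⟩) (vv n h lam))
          - s0 • (Pi.single (⟨j, hjn⟩ : Fin n) (vv n h lam) : Fin n → Verma n h lam)
          - (-s0) • (Pi.single (⟨j, hjn⟩ : Fin n) (vv n h lam) : Fin n → Verma n h lam)
        = Ftens n h ⟨l, hk⟩ (Pi.single (clo n ⟨l, hk⟩) (vv n h lam)) := by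
      module
    rw [hfin]
    exact Vhat_Ftens n h lam j _ (Vhat_single n h lam j _ (show l < j by omega))
  | d+1, l, hln, hd => by
    have hk : l < n - 1 := by omega
    have hl1n : l + 1 < n := by omega
    have IH := parta j hjn d (l+1) hl1n (by omega)
    have huFn : uFn n h l = uF n (qh h) ⟨l, hk⟩ := by simp [uFn, hk]
    set x := psi n h (l+1) j • vv n h lam with hxd
    have hx : psi n h l j • vv n h lam = uF n (qh h) ⟨l, hk⟩ • x := by
      rw [psi_cons n h l j (by omega), mul_smul, huFn]
    set L := List.range' (l+1) (j - (l+1)) with hL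
    have hxL : x = prodF n h L • vv n h lam := by
      rw [hxd, psi_prodF]
    have hLlt : ∀ y ∈ L, y < n - 1 := by
      intro y hy
      rw [hL, List.mem_range'_1] at hy
      omega
    have h2 : (uKinv n (qh h) (clo n ⟨l, hk⟩) * uK n (qh h) (chi n ⟨l, hk⟩)) • x
        = (qz h (lam (chi n ⟨l, hk⟩) - lam (clo n ⟨l, hk⟩))
            * qh h ^ (wtc ((chi n ⟨l, hk⟩ : Fin n) : ℕ) L - wtc ((clo n ⟨l, hk⟩ : Fin n) : ℕ) L))
              • x := by
      rw [hxL]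
      exact KK_prodF n h lam ⟨l, hk⟩ L hLlt
    have hwchi : wtc ((chi n ⟨l, hk⟩ : Fin n) : ℕ) L = -1 := by
      have hcp : L.countP (fun t => t + 1 = l + 1) = 0 := by
        rw [List.countP_eq_zero]
        intro a ha
        rw [hL, List.mem_range'_1] at ha
        simp only [decide_eq_true_eq]
        omega
      have hct : L.count (l+1) = 1 :=
        List.count_eq_one_of_mem List.nodup_range' (by rw [hL, List.mem_range'_1]; omega)
      simp only [wtc, chi, hcp, hct]
      norm_num
      intro a ha
      rw [hL, List.mem_range'_1] at ha
      omega
    have hwclo : wtc ((clo n ⟨l, hk⟩ : Fin n) : ℕ) L = 0 := by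
      have hcp : L.countP (fun t => t + 1 = l) = 0 := by
        rw [List.countP_eq_zero]
        intro a ha
        rw [hL, List.mem_range'_1] at ha
        simp only [decide_eq_true_eq]
        omega
      have hct : L.count l = 0 := by
        rw [List.count_eq_zero]
        rw [hL, List.mem_range'_1]
        omega
      simp only [wtc, clo, hcp, hct]
      norm_num
      intro a ha
      rw [hL, List.mem_range'_1] at ha
      exact decide_eq_false (by omega)
    set s := qz h (lam (chi n ⟨l, hk⟩) - lam (clo n ⟨l, hk⟩)) * qz h (-1) with hs
    have h2' : (uKinv n (qh h) (clo n ⟨l, hk⟩) * uK n (qh h) (chi n ⟨l, hk⟩)) • x = s • x := by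
      rw [h2, hwchi, hwclo, hs]
      norm_num [Aux.qh_inv_eq]
    have hchij : chi n ⟨l, hk⟩ = (⟨l+1, hl1n⟩ : Fin n) := rfl
    set C' := ((-1:ℂ)^(j-(l+1)) * qz h (lam ⟨j, hjn⟩ - lam ⟨l+1, hl1n⟩ + ((l+1 : ℕ):ℂ) - (j:ℂ) + 1))
      with hC'
    have hC : ((-1:ℂ)^(j-l) * qz h (lam ⟨j, hjn⟩ - lam ⟨l, hln⟩ + (l:ℂ) - (j:ℂ) + 1))
        = -(s * C') := by
      rw [hs, hC', hchij, show clo n ⟨l, hk⟩ = (⟨l, hln⟩ : Fin n) from rfl]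
      rw [show j - l = (j - (l+1)) + 1 by omega, pow_succ]
      have hA : (lam ⟨j, hjn⟩ - lam ⟨l, hln⟩ + (l:ℂ) - (j:ℂ) + 1)
          = ((lam ⟨l+1, hl1n⟩ - lam ⟨l, hln⟩) + (-1)
              + (lam ⟨j, hjn⟩ - lam ⟨l+1, hl1n⟩ + ((l+1 : ℕ):ℂ) - (j:ℂ) + 1)) := by
        push_cast
        ring
      rw [hA, Aux.qz_add, Aux.qz_add]
      ring
    have heq : Pi.single (clo n ⟨l, hk⟩) (uF n (qh h) ⟨l, hk⟩ • x)
        = Ftens n h ⟨l, hk⟩ (Pi.single (clo n ⟨l, hk⟩) x)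
          - Pi.single (chi n ⟨l, hk⟩)
              ((uKinv n (qh h) (clo n ⟨l, hk⟩) * uK n (qh h) (chi n ⟨l, hk⟩)) • x) := by
      rw [Ftens_single_eq]
      abel
    rw [hx, hC, show (⟨l, hln⟩ : Fin n) = clo n ⟨l, hk⟩ from rfl, heq, h2', single_csmul, hchij]
    have hfin : Ftens n h ⟨l, hk⟩ (Pi.single (clo n ⟨l, hk⟩) x)
          - s • (Pi.single (⟨l+1, hl1n⟩ : Fin n) x : Fin n → Verma n h lam)
          - (-(s * C')) • (Pi.single (⟨j, hjn⟩ : Fin n) (vv n h lam) : Fin n → Verma n h lam)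
        = Ftens n h ⟨l, hk⟩ (Pi.single (clo n ⟨l, hk⟩) x)
          + (-s) • ((Pi.single (⟨l+1, hl1n⟩ : Fin n) x : Fin n → Verma n h lam)
              - C' • (Pi.single (⟨j, hjn⟩ : Fin n) (vv n h lam) : Fin n → Verma n h lam)) := by
      module
    rw [hfin]
    refine add_mem ?_ (Submodule.smul_mem _ _ IH)
    refine Vhat_Ftens n h lam j _ ?_
    rw [show (clo n ⟨l, hk⟩ : Fin n) = ⟨l, hln⟩ from rfl, hxL]
    exact mem_of_not_fail n h lam j L hLlt l hln
      (not_fail_of_not_mem j L l (by omega)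
        (by rw [hL, List.mem_range'_1]; omega))

lemma partb (i j : ℕ) (hij : i < j) (hjn : j < n) (hin : i < n)
    (g : Equiv.Perm (Fin (j - i))) (hg : g ≠ Equiv.refl _) :
    Pi.single (⟨i, hin⟩ : Fin n)
        ((List.ofFn (fun t : Fin (j-i) => uFn n h (i + (g t : ℕ)))).prod • vv n h lam)
      ∈ Vhat n h lam j := by
  set L : List ℕ := List.ofFn (fun t : Fin (j-i) => i + (g t : ℕ)) with hLdef
  have hlen : L.length = j - i := by simp [hLdef]
  have hmem : ∀ x ∈ L, i ≤ x ∧ x < j := by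
    intro x hx
    rw [hLdef, List.mem_ofFn] at hx
    obtain ⟨t, ht⟩ := hx
    have h1 := (g t).isLt
    omega
  have hlt : ∀ x ∈ L, x < n - 1 := fun x hx => by
    have := hmem x hx
    omega
  have hltj : ∀ x ∈ L, x < j := fun x hx => (hmem x hx).2
  have hnd : L.Nodup := by
    rw [hLdef]
    apply List.nodup_ofFn.mpr
    intro a b hab
    simp only at hab
    exact g.injective (Fin.ext (by omega))
  have hnf : ¬ fail j i L := by
    intro hf
    have hfe := fail_filter j L hnd hltj i hf
    have hself : L.filter (fun x => decide (i ≤ x)) = L :=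
      List.filter_eq_self.mpr (fun a ha => by simpa using (hmem a ha).1)
    rw [hself] at hfe
    apply hg
    apply Equiv.ext
    intro t
    have ht : (t : ℕ) < L.length := by rw [hlen]; exact t.isLt
    have h1 : L[(t:ℕ)] = i + (g t : ℕ) := by
      simp [hLdef]
    have h2 := List.getElem_of_eq hfe ht
    rw [List.getElem_range'] at h2
    rw [h1] at h2
    have : (g t : ℕ) = (t : ℕ) := by omega
    simp [Equiv.refl]
    exact Fin.ext this
  have hmain := mem_of_not_fail n h lam j L hlt i hin hnf
  have hconv : prodF n h L = (List.ofFn (fun t : Fin (j-i) => uFn n h (i + (g t : ℕ)))).prod := by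
    rw [prodF, hLdef, List.map_ofFn]
    rfl
  rwa [hconv] at hmain

theorem principal_monomials_mod_filtration (n : ℕ) (hn : 2 ≤ n) (h : ℂ)
    (hq : NotRootOfUnity (qh h)) (lam : Fin n → ℂ) (i j : ℕ) (hij : i < j) (hjn : j < n) :
    (∀ (l : ℕ) (hil : i ≤ l) (hlj : l < j),
      (Pi.single (⟨l, by omega⟩ : Fin n) (psi n h l j • vv n h lam)
        - ((-1:ℂ)^(j-l) * qz h (lamn n lam j - lamn n lam l + (l:ℂ) - (j:ℂ) + 1)) •
            (Pi.single (⟨j, hjn⟩ : Fin n) (vv n h lam) : Fin n → Verma n h lam))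
        ∈ Vhat n h lam j) ∧
    (∀ g : Equiv.Perm (Fin (j - i)), g ≠ Equiv.refl _ →
      Pi.single (⟨i, by omega⟩ : Fin n)
          ((List.ofFn (fun t : Fin (j-i) => uFn n h (i + (g t : ℕ)))).prod • vv n h lam)
        ∈ Vhat n h lam j) := by
  constructor
  · intro l hil hlj
    have hln : l < n := by omega
    rw [show lamn n lam j = lam ⟨j, hjn⟩ from dif_pos hjn,
        show lamn n lam l = lam ⟨l, hln⟩ from dif_pos hln]
    exact parta n h lam j hjn (j - l - 1) l hln (by omega)
  · intro g hg
    exact partb n h lam i j hij hjn (by omega) g hg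

end QGL
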